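/- In the tautology-reduction profile, for every completion T, the set of winners of T (candidates of maximum score under r) is exactly the set of literals selected by T; that is, for each i the winner among {x_i, ¬x_i} is precisely the one ranked higher by the completion of voter v_i, and x₀ is never a winner. -/

import Mathlib

/-- The candidate set `C = {x₀} ∪ {x_i, ¬x_i : 1 ≤ i ≤ ℓ}`:
`none` is the special candidate `x₀`, and `some (i, true)` / `some (i, false)`
are the literals `x_i` / `¬x_i`.  Thus `|C| = m = 2ℓ+1`. -/
abbrev Cand (ℓ : ℕ) := Option (Fin ℓ × Bool)

/-- The 0-based index of candidate `c` in the fixed enumeration `oth i` of the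
`m − 2` candidates other than `x_i, ¬x_i` (the list `c₁,…,c_{m−2}`). -/
noncomputable def othIdx {ℓ : ℕ} (oth : Fin ℓ → Fin (2 * ℓ - 1) → Cand ℓ)
    (i : Fin ℓ) (c : Cand ℓ) : ℕ :=
  if h : ∃ q, oth i q = c then (h.choose : ℕ) else 0

/-- The (1-based) position of candidate `c` in the base linear order
`c^i = (c₁,…,c_{d−1}, x_i, ¬x_i, c_d,…,c_{m−2})`. -/
noncomputable def viBasePos {ℓ : ℕ} (oth : Fin ℓ → Fin (2 * ℓ - 1) → Cand ℓ)
    (d : ℕ) (i : Fin ℓ) (c : Cand ℓ) : ℕ :=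
  if c = some (i, true) then d
  else if c = some (i, false) then d + 1
  else if othIdx oth i c + 1 < d then othIdx oth i c + 1 else othIdx oth i c + 3

/-- The (1-based) position of candidate `c` in the linear order of voter `v_i^j`
(for `j ∈ {1,…,m−3}`): the candidates `c₁,…,c_{m−2}` are shifted cyclically `j`
positions to the left, `x_i` is at position `d` and `¬x_i` at `d+1` when `j` is odd,
and they are swapped when `j` is even. -/
noncomputable def vijPos {ℓ : ℕ} (oth : Fin ℓ → Fin (2 * ℓ - 1) → Cand ℓ)
    (d : ℕ) (i : Fin ℓ) (j : ℕ) (c : Cand ℓ) : ℕ :=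
  if c = some (i, true) then (if j % 2 = 1 then d else d + 1)
  else if c = some (i, false) then (if j % 2 = 1 then d + 1 else d)
  else
    let p := (othIdx oth i c + (2 * ℓ - 1) - j) % (2 * ℓ - 1) + 1
    if p < d then p else p + 2

/-- The (1-based) position of candidate `c` in the linear order of voter `u_j`
(for `j ∈ {1,…,m−1}`): the literals `(c″₁,…,c″_{m−1}) = (x₁,¬x₁,…,x_ℓ,¬x_ℓ)`
shifted cyclically `j` positions to the left, followed by `x₀` at position `m`. -/
def uPos (ℓ : ℕ) (j : ℕ) (c : Cand ℓ) : ℕ :=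
  match c with
  | none => 2 * ℓ + 1
  | some (i, b) => ((2 * (i : ℕ) + (if b then 0 else 1)) + 2 * ℓ - j) % (2 * ℓ) + 1

/-- `pos` is (the position function of) a linear order on the `m = 2ℓ+1` candidates:
it is injective with values in `{1,…,m}`. -/
def IsPosOrder (ℓ : ℕ) (pos : Cand ℓ → ℕ) : Prop :=
  Function.Injective pos ∧ ∀ c, 1 ≤ pos c ∧ pos c ≤ 2 * ℓ + 1

/-- `Tv` is a completion of the tautology-reduction profile: `Tv i` is a linear order
extending the partial order of voter `v_i`, i.e. the order `c^i` with (only) the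
comparison between `x_i` and `¬x_i` deleted.  (The orders of the voters `v_i^j` and
`u_j` are already total, so a completion is determined by the `Tv i`.) -/
def IsProfileCompletion {ℓ : ℕ} (oth : Fin ℓ → Fin (2 * ℓ - 1) → Cand ℓ)
    (d : ℕ) (Tv : Fin ℓ → Cand ℓ → ℕ) : Prop :=
  ∀ i, IsPosOrder ℓ (Tv i) ∧
    ∀ a b, viBasePos oth d i a < viBasePos oth d i b →
      ¬(a = some (i, true) ∧ b = some (i, false)) → Tv i a < Tv i b

/-- The score `s(T,c)` of candidate `c` in the completion given by `Tv`: the sum over all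
`n = ℓ(m−2)+(m−1)` voters (the `v_i`, the `v_i^j` for `j ∈ {1,…,m−3}`, and the `u_j` for
`j ∈ {1,…,m−1}`) of `r` applied to the position of `c`. -/
noncomputable def score {ℓ : ℕ} (r : ℕ → ℕ) (oth : Fin ℓ → Fin (2 * ℓ - 1) → Cand ℓ)
    (d : ℕ) (Tv : Fin ℓ → Cand ℓ → ℕ) (c : Cand ℓ) : ℕ :=
  (∑ i : Fin ℓ, r (Tv i c)) +
  (∑ i : Fin ℓ, ∑ j ∈ Finset.Icc 1 (2 * ℓ - 2), r (vijPos oth d i j c)) +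
  (∑ j ∈ Finset.Icc 1 (2 * ℓ), r (uPos ℓ j c))

/-- The completion `Tv` selects the literal `x_i` (if `b = true`) resp. `¬x_i`
(if `b = false`): the completion of voter `v_i` places it above its negation. -/
def Selects {ℓ : ℕ} (Tv : Fin ℓ → Cand ℓ → ℕ) (i : Fin ℓ) (b : Bool) : Prop :=
  if b then Tv i (some (i, true)) < Tv i (some (i, false))
  else Tv i (some (i, false)) < Tv i (some (i, true))

/-- `c` is a winner of the completion `Tv`: it has maximum score. -/
noncomputable def IsWinner {ℓ : ℕ} (r : ℕ → ℕ) (oth : Fin ℓ → Fin (2 * ℓ - 1) → Cand ℓ)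
    (d : ℕ) (Tv : Fin ℓ → Cand ℓ → ℕ) (c : Cand ℓ) : Prop :=
  ∀ c', score r oth d Tv c' ≤ score r oth d Tv c


lemma sum_mod_shift (n k : ℕ) (g : ℕ → ℕ) :
    ∑ j ∈ Finset.range n, g ((k + j) % n) = ∑ j ∈ Finset.range n, g j := by
  induction k with
  | zero =>
    refine Finset.sum_congr rfl fun j hj => ?_
    rw [Nat.zero_add, Nat.mod_eq_of_lt (Finset.mem_range.mp hj)]
  | succ k ih =>
    rw [← ih]
    rcases Nat.eq_zero_or_pos n with h | h
    · simp [h]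
    have e1 : ∀ m : ℕ, ∑ j ∈ Finset.range n, g ((m + j) % n)
        = ∑ j ∈ Finset.Ico m (m + n), g (j % n) := by
      intro m
      rw [Finset.sum_Ico_eq_sum_range]
      simp
    rw [e1, e1]
    rw [Finset.sum_eq_sum_Ico_succ_bot (by omega : k < k + n)]
    rw [show k + 1 + n = (k + n) + 1 from by omega,
      Finset.sum_Ico_succ_top (by omega : k + 1 ≤ k + n)]
    rw [Nat.add_mod_right]
    omega

lemma sum_cycle (n k : ℕ) (g : ℕ → ℕ) :
    ∑ j ∈ Finset.Icc 1 n, g ((k + n - j) % n) = ∑ t ∈ Finset.range n, g t := by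
  rcases Nat.eq_zero_or_pos n with h | h
  · simp [h]
  rw [show Finset.Icc 1 n = Finset.Ico 1 (n+1) from by rw [Finset.Ico_add_one_right_eq_Icc]]
  rw [Finset.sum_Ico_eq_sum_range]
  rw [show n + 1 - 1 = n from rfl]
  calc ∑ i ∈ Finset.range n, g ((k + n - (1 + i)) % n)
      = ∑ i ∈ Finset.range n, (fun t => g ((k + t) % n)) (n - 1 - i) := by
        refine Finset.sum_congr rfl fun i hi => ?_
        have hi' := Finset.mem_range.mp hi
        congr 2
        omega
    _ = ∑ i ∈ Finset.range n, g ((k + i) % n) := by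
        simpa using Finset.sum_range_reflect (fun t => g ((k + t) % n)) n
    _ = ∑ i ∈ Finset.range n, g i := sum_mod_shift n k g

lemma sum_alt (t : ℕ) (A B : ℕ) :
    ∑ j ∈ Finset.Icc 1 (2*t), (if j % 2 = 1 then A else B) = t * (A + B) := by
  induction t with
  | zero => simp
  | succ t ih =>
    rw [show 2*(t+1) = (2*t+1)+1 from by ring,
      Finset.sum_Icc_succ_top (by omega : 1 ≤ 2*t+1+1),
      Finset.sum_Icc_succ_top (by omega : 1 ≤ 2*t+1), ih]
    rw [if_pos (by omega : (2*t+1) % 2 = 1), if_neg (by omega : ¬ (2*t+1+1) % 2 = 1)]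
    ring

lemma rank_eq {α : Type*} [Fintype α] [DecidableEq α] (f : α → ℕ) (hinj : Function.Injective f)
    (m : ℕ) (hm : Fintype.card α = m) (hrange : ∀ c, 1 ≤ f c ∧ f c ≤ m) (c : α) :
    (Finset.univ.filter fun c' => f c' < f c).card = f c - 1 := by
  have h1 : (Finset.univ.filter fun c' => f c' < f c).card ≤ f c - 1 := by
    calc (Finset.univ.filter fun c' => f c' < f c).card
        ≤ (Finset.Icc 1 (f c - 1)).card := by
          refine Finset.card_le_card_of_injOn f ?_ fun a _ b _ h => hinj h
          intro a ha
          simp only [Finset.mem_coe, Finset.mem_filter, Finset.mem_univ, true_and] at ha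
          simp only [Finset.mem_coe, Finset.mem_Icc]
          exact ⟨(hrange a).1, by omega⟩
      _ = f c - 1 := by rw [Nat.card_Icc]; omega
  have h2 : (Finset.univ.filter fun c' => f c < f c').card ≤ m - f c := by
    calc (Finset.univ.filter fun c' => f c < f c').card
        ≤ (Finset.Icc (f c + 1) m).card := by
          refine Finset.card_le_card_of_injOn f ?_ fun a _ b _ h => hinj h
          intro a ha
          simp only [Finset.mem_coe, Finset.mem_filter, Finset.mem_univ, true_and] at ha
          simp only [Finset.mem_coe, Finset.mem_Icc]
          exact ⟨by omega, (hrange a).2⟩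
      _ = m - f c := by rw [Nat.card_Icc]; omega
  have h3 : (Finset.univ.filter fun c' => f c' < f c).card
      + ((Finset.univ.filter fun c' => f c < f c').card + 1) = m := by
    have heq : (Finset.univ.filter fun c' => ¬ f c' < f c)
        = insert c (Finset.univ.filter fun c' => f c < f c') := by
      ext a
      simp only [Finset.mem_filter, Finset.mem_univ, true_and, Finset.mem_insert, not_lt]
      constructor
      · intro h
        rcases Nat.lt_or_ge (f c) (f a) with h' | h'
        · exact Or.inr h'
        · exact Or.inl (hinj (le_antisymm h' h))
      · rintro (rfl | h)
        · exact le_refl _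
        · omega
    have hp := Finset.card_filter_add_card_filter_not
      (s := (Finset.univ : Finset α)) (p := fun c' => f c' < f c)
    rw [heq, Finset.card_insert_of_notMem (by simp), Finset.card_univ, hm] at hp
    exact hp
  have := hrange c
  omega
/-- in the tautology-reduction profile, for every completion `T`, the set of
winners (candidates of maximum score) is exactly the set of literals selected by `T`;
in particular `x₀` is never a winner. -/
theorem winners_eq_selected_literals (ℓ : ℕ) (hℓ : 1 ≤ ℓ) (r : ℕ → ℕ)
    (hr_mono : ∀ p q, 1 ≤ p → p ≤ q → q ≤ 2 * ℓ + 1 → r q ≤ r p)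
    (hr_strict : r (2 * ℓ + 1) < r 1)
    (d : ℕ) (hd1 : 1 ≤ d) (hd2 : d ≤ 2 * ℓ) (hrd : r (d + 1) < r d)
    (oth : Fin ℓ → Fin (2 * ℓ - 1) → Cand ℓ)
    (hoth_inj : ∀ i, Function.Injective (oth i))
    (hoth_ne : ∀ i q, oth i q ≠ some (i, true) ∧ oth i q ≠ some (i, false))
    (Tv : Fin ℓ → Cand ℓ → ℕ) (hTv : IsProfileCompletion oth d Tv) :
    ∀ c : Cand ℓ, IsWinner r oth d Tv c ↔
      ∃ (i : Fin ℓ) (b : Bool), c = some (i, b) ∧ Selects Tv i b := by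
  classical
  -- basic cardinality
  have hcard : Fintype.card (Cand ℓ) = 2*ℓ+1 := by
    simp [Cand]; ring
  -- surjectivity of `oth i` onto the complement of the pair
  have hoth_surj : ∀ (i : Fin ℓ) (c : Cand ℓ), c ≠ some (i,true) → c ≠ some (i,false) →
      ∃ q, oth i q = c := by
    intro i c h1 h2
    by_contra hno
    push_neg at hno
    have himg : Finset.univ.image (oth i)
        ⊆ Finset.univ \ {some (i,true), some (i,false), c} := by
      intro x hx
      simp only [Finset.mem_image] at hx
      obtain ⟨q, -, hq⟩ := hx
      simp only [Finset.mem_sdiff, Finset.mem_univ, true_and, Finset.mem_insert,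
        Finset.mem_singleton]
      push_neg
      exact ⟨by rw [← hq]; exact (hoth_ne i q).1, by rw [← hq]; exact (hoth_ne i q).2,
        by rw [← hq]; exact hno q⟩
    have hc1 : (Finset.univ.image (oth i)).card = 2*ℓ-1 := by
      rw [Finset.card_image_of_injective _ (hoth_inj i), Finset.card_univ, Fintype.card_fin]
    have hcard3 : ({some (i,true), some (i,false), c} : Finset (Cand ℓ)).card = 3 := by
      rw [Finset.card_insert_of_notMem, Finset.card_insert_of_notMem, Finset.card_singleton]
      · simp only [Finset.mem_singleton]
        exact fun h => h2 h.symm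
      · simp only [Finset.mem_insert, Finset.mem_singleton]
        push_neg
        exact ⟨by simp, fun h => h1 h.symm⟩
    have hc2 : (Finset.univ \ {some (i,true), some (i,false), c} : Finset (Cand ℓ)).card
        = (2*ℓ+1) - 3 := by
      rw [Finset.card_sdiff_of_subset (Finset.subset_univ _), Finset.card_univ, hcard, hcard3]
    have hle := Finset.card_le_card himg
    rw [hc1, hc2] at hle
    omega
  -- index spec
  have hidx : ∀ (i : Fin ℓ) (c : Cand ℓ), c ≠ some (i,true) → c ≠ some (i,false) →
      ∃ q : Fin (2*ℓ-1), oth i q = c ∧ (q : ℕ) = othIdx oth i c := by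
    intro i c h1 h2
    have h := hoth_surj i c h1 h2
    refine ⟨h.choose, h.choose_spec, ?_⟩
    simp only [othIdx, dif_pos h]
  have othIdx_oth : ∀ (i : Fin ℓ) (q : Fin (2*ℓ-1)), othIdx oth i (oth i q) = (q : ℕ) := by
    intro i q
    obtain ⟨q', h1, h2⟩ := hidx i (oth i q) (hoth_ne i q).1 (hoth_ne i q).2
    rw [← h2, hoth_inj i h1]
  -- viBasePos facts
  have hg_pair_t : ∀ i : Fin ℓ, viBasePos oth d i (some (i,true)) = d := by
    intro i; simp [viBasePos]
  have hg_pair_f : ∀ i : Fin ℓ, viBasePos oth d i (some (i,false)) = d+1 := by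
    intro i; simp [viBasePos]
  have hg_other : ∀ (i : Fin ℓ) (c : Cand ℓ), c ≠ some (i,true) → c ≠ some (i,false) →
      viBasePos oth d i c
        = if othIdx oth i c + 1 < d then othIdx oth i c + 1 else othIdx oth i c + 3 := by
    intro i c h1 h2
    simp [viBasePos, h1, h2]
  have hg_range : ∀ (i : Fin ℓ) (c : Cand ℓ), 1 ≤ viBasePos oth d i c ∧
      viBasePos oth d i c ≤ 2*ℓ+1 := by
    intro i c
    by_cases h1 : c = some (i,true)
    · rw [h1, hg_pair_t]; omega
    by_cases h2 : c = some (i,false)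
    · rw [h2, hg_pair_f]; omega
    obtain ⟨q, hq, hq2⟩ := hidx i c h1 h2
    have hqlt : othIdx oth i c < 2*ℓ-1 := by rw [← hq2]; exact q.isLt
    rw [hg_other i c h1 h2]
    split_ifs <;> omega
  have hg_inj : ∀ i : Fin ℓ, Function.Injective (viBasePos oth d i) := by
    intro i a b hab
    have key : ∀ c : Cand ℓ, c = some (i,true) ∨ c = some (i,false) ∨
        (c ≠ some (i,true) ∧ c ≠ some (i,false)) := by tauto
    rcases key a with ha | ha | ⟨ha1, ha2⟩ <;> rcases key b with hb | hb | ⟨hb1, hb2⟩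
    · rw [ha, hb]
    · rw [ha, hb] at hab; rw [hg_pair_t, hg_pair_f] at hab; omega
    · exfalso
      obtain ⟨qb, hqb, hqb2⟩ := hidx i b hb1 hb2
      have hblt : othIdx oth i b < 2*ℓ-1 := by rw [← hqb2]; exact qb.isLt
      rw [ha, hg_pair_t, hg_other i b hb1 hb2] at hab
      split_ifs at hab <;> omega
    · rw [ha, hb] at hab; rw [hg_pair_f, hg_pair_t] at hab; omega
    · rw [ha, hb]
    · exfalso
      obtain ⟨qb, hqb, hqb2⟩ := hidx i b hb1 hb2
      have hblt : othIdx oth i b < 2*ℓ-1 := by rw [← hqb2]; exact qb.isLt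
      rw [ha, hg_pair_f, hg_other i b hb1 hb2] at hab
      split_ifs at hab <;> omega
    · exfalso
      obtain ⟨qa, hqa, hqa2⟩ := hidx i a ha1 ha2
      have halt : othIdx oth i a < 2*ℓ-1 := by rw [← hqa2]; exact qa.isLt
      rw [hb, hg_pair_t, hg_other i a ha1 ha2] at hab
      split_ifs at hab <;> omega
    · exfalso
      obtain ⟨qa, hqa, hqa2⟩ := hidx i a ha1 ha2
      have halt : othIdx oth i a < 2*ℓ-1 := by rw [← hqa2]; exact qa.isLt
      rw [hb, hg_pair_f, hg_other i a ha1 ha2] at hab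
      split_ifs at hab <;> omega
    · obtain ⟨qa, hqa, hqa2⟩ := hidx i a ha1 ha2
      obtain ⟨qb, hqb, hqb2⟩ := hidx i b hb1 hb2
      rw [hg_other i a ha1 ha2, hg_other i b hb1 hb2] at hab
      have : othIdx oth i a = othIdx oth i b := by split_ifs at hab <;> omega
      have hq : qa = qb := Fin.ext (by omega)
      rw [← hqa, ← hqb, hq]
  have hg_surj : ∀ (i : Fin ℓ) (v : ℕ), 1 ≤ v → v ≤ 2*ℓ+1 → v ≠ d → v ≠ d+1 →
      ∃ c : Cand ℓ, c ≠ some (i,true) ∧ c ≠ some (i,false) ∧ viBasePos oth d i c = v := by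
    intro i v hv1 hv2 hvd hvd1
    have hplt : (if v < d then v - 1 else v - 3) < 2*ℓ-1 := by split_ifs <;> omega
    refine ⟨oth i ⟨if v < d then v - 1 else v - 3, hplt⟩, (hoth_ne i _).1, (hoth_ne i _).2, ?_⟩
    rw [hg_other _ _ (hoth_ne i _).1 (hoth_ne i _).2, othIdx_oth]
    simp only
    split_ifs <;> omega
  -- the completion agrees with the base order outside the pair
  have hTv_other : ∀ (i : Fin ℓ) (c : Cand ℓ), c ≠ some (i,true) → c ≠ some (i,false) →
      Tv i c = viBasePos oth d i c := by
    intro i c h1 h2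
    obtain ⟨⟨hfinj, hfrange⟩, hfmono⟩ := hTv i
    have hrankf := rank_eq (Tv i) hfinj (2*ℓ+1) hcard hfrange c
    have hrankg := rank_eq (viBasePos oth d i) (hg_inj i) (2*ℓ+1) hcard (hg_range i) c
    have hsets : (Finset.univ.filter fun c' => Tv i c' < Tv i c)
        = Finset.univ.filter fun c' => viBasePos oth d i c' < viBasePos oth d i c := by
      ext c'
      simp only [Finset.mem_filter, Finset.mem_univ, true_and]
      constructor
      · intro h
        by_contra hc
        push_neg at hc
        rcases Nat.eq_or_lt_of_le hc with heq | hlt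
        · have := hg_inj i heq.symm
          subst this
          omega
        · have := hfmono c c' hlt (by rintro ⟨rfl, -⟩; exact h1 rfl)
          omega
      · intro h
        exact hfmono c' c h (by rintro ⟨-, hc⟩; exact h2 hc)
    rw [hsets] at hrankf
    have h1f := (hfrange c).1
    have h1g := (hg_range i c).1
    omega
  have hTv_pair : ∀ i : Fin ℓ, (Tv i (some (i,true)) = d ∧ Tv i (some (i,false)) = d+1) ∨
      (Tv i (some (i,true)) = d+1 ∧ Tv i (some (i,false)) = d) := by
    intro i
    obtain ⟨⟨hfinj, hfrange⟩, -⟩ := hTv i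
    have key : ∀ b : Bool, Tv i (some (i,b)) = d ∨ Tv i (some (i,b)) = d+1 := by
      intro b
      by_contra hcon
      push_neg at hcon
      obtain ⟨hne1, hne2⟩ := hcon
      have hr := hfrange (some (i,b))
      obtain ⟨c, hc1, hc2, hc3⟩ := hg_surj i (Tv i (some (i,b))) hr.1 hr.2 hne1 hne2
      have hceq : c = some (i,b) := hfinj (by rw [hTv_other i c hc1 hc2, hc3])
      cases b
      · exact hc2 hceq
      · exact hc1 hceq
    have hne : Tv i (some (i,true)) ≠ Tv i (some (i,false)) := by
      intro h
      have := hfinj h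
      simp at this
    rcases key true with h | h <;> rcases key false with h' | h'
    · exact absurd (h.trans h'.symm) hne
    · exact Or.inl ⟨h, h'⟩
    · exact Or.inr ⟨h, h'⟩
    · exact absurd (h.trans h'.symm) hne
  have hsel : ∀ (i : Fin ℓ) (b : Bool), Selects Tv i b ↔ Tv i (some (i,b)) = d := by
    intro i b
    rcases hTv_pair i with ⟨h1, h2⟩ | ⟨h1, h2⟩ <;> cases b <;>
      simp [Selects, h1, h2]
  -- score building blocks
  set W : ℕ := ∑ t ∈ Finset.range (2*ℓ-1), r (if t+1 < d then t+1 else t+3) with hW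
  set Su : ℕ := ∑ t ∈ Finset.range (2*ℓ), r (t+1) with hSu
  have hblock_other : ∀ (k : Fin ℓ) (c : Cand ℓ), c ≠ some (k,true) → c ≠ some (k,false) →
      r (Tv k c) + ∑ j ∈ Finset.Icc 1 (2*ℓ-2), r (vijPos oth d k j c) = W := by
    intro k c h1 h2
    obtain ⟨q, hq, hq2⟩ := hidx k c h1 h2
    have hq3 : othIdx oth k c < 2*ℓ-1 := by rw [← hq2]; exact q.isLt
    set G : ℕ → ℕ := fun t => r (if t+1 < d then t+1 else t+3) with hG
    have hterm : ∀ j ∈ Finset.Icc 1 (2*ℓ-2), r (vijPos oth d k j c)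
        = G ((othIdx oth k c + (2*ℓ-1) - j) % (2*ℓ-1)) := by
      intro j hj
      simp only [vijPos, if_neg h1, if_neg h2, hG]
    have hgval : G (othIdx oth k c) = r (Tv k c) := by
      rw [hTv_other k c h1 h2, hg_other k c h1 h2]
    have hsplit : ∑ j ∈ Finset.Icc 1 (2*ℓ-1), G ((othIdx oth k c + (2*ℓ-1) - j) % (2*ℓ-1))
        = (∑ j ∈ Finset.Icc 1 (2*ℓ-2), G ((othIdx oth k c + (2*ℓ-1) - j) % (2*ℓ-1)))
          + G (othIdx oth k c) := by
      rw [show (2*ℓ-1) = (2*ℓ-2)+1 from by omega,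
        Finset.sum_Icc_succ_top (by omega : 1 ≤ 2*ℓ-2+1)]
      congr 1
      rw [Nat.add_sub_cancel]
      exact congrArg G (Nat.mod_eq_of_lt (by omega))
    rw [Finset.sum_congr rfl hterm, ← hgval, Nat.add_comm, ← hsplit,
      sum_cycle (2*ℓ-1) (othIdx oth k c) G, hW]
  have hblock_pair : ∀ (i : Fin ℓ) (b : Bool),
      ∑ j ∈ Finset.Icc 1 (2*ℓ-2), r (vijPos oth d i j (some (i,b)))
        = (ℓ-1) * (r d + r (d+1)) := by
    intro i b
    have h22 : 2*ℓ-2 = 2*(ℓ-1) := by omega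
    cases b
    · have hterm : ∀ j ∈ Finset.Icc 1 (2*ℓ-2), r (vijPos oth d i j (some (i,false)))
          = if j % 2 = 1 then r (d+1) else r d := by
        intro j hj
        by_cases hji : j % 2 = 1 <;> simp [vijPos, hji]
      rw [Finset.sum_congr rfl hterm, h22, sum_alt]
      ring
    · have hterm : ∀ j ∈ Finset.Icc 1 (2*ℓ-2), r (vijPos oth d i j (some (i,true)))
          = if j % 2 = 1 then r d else r (d+1) := by
        intro j hj
        by_cases hji : j % 2 = 1 <;> simp [vijPos, hji]
      rw [Finset.sum_congr rfl hterm, h22, sum_alt]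
  have hu_lit : ∀ (i : Fin ℓ) (b : Bool),
      ∑ j ∈ Finset.Icc 1 (2*ℓ), r (uPos ℓ j (some (i,b))) = Su := by
    intro i b
    have := sum_cycle (2*ℓ) (2*(i:ℕ) + (if b then 0 else 1)) (fun t => r (t+1))
    rw [hSu]
    simpa [uPos] using this
  have hu_none : ∑ j ∈ Finset.Icc 1 (2*ℓ), r (uPos ℓ j none) = 2*ℓ * r (2*ℓ+1) := by
    simp [uPos, Nat.card_Icc, mul_comm]
  -- score formulas
  have hscore_lit : ∀ (i : Fin ℓ) (b : Bool), score r oth d Tv (some (i,b)) =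
      r (Tv i (some (i,b))) + (ℓ-1)*(r d + r (d+1)) + (ℓ-1)*W + Su := by
    intro i b
    have hsplit : ∀ k : Fin ℓ,
        r (Tv k (some (i,b))) + ∑ j ∈ Finset.Icc 1 (2*ℓ-2), r (vijPos oth d k j (some (i,b)))
          = if k = i then r (Tv i (some (i,b))) + (ℓ-1)*(r d + r (d+1)) else W := by
      intro k
      by_cases hk : k = i
      · subst hk
        rw [if_pos rfl, hblock_pair k b]
      · rw [if_neg hk]
        refine hblock_other k _ ?_ ?_ <;>
          · simp only [ne_eq, Option.some.injEq, Prod.mk.injEq, not_and]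
            intro h
            exact absurd h.symm hk
    have hmerge : (∑ k : Fin ℓ, r (Tv k (some (i,b))))
        + ∑ k : Fin ℓ, ∑ j ∈ Finset.Icc 1 (2*ℓ-2), r (vijPos oth d k j (some (i,b)))
        = r (Tv i (some (i,b))) + (ℓ-1)*(r d + r (d+1)) + (ℓ-1)*W := by
      rw [← Finset.sum_add_distrib, Finset.sum_congr rfl (fun k _ => hsplit k),
        ← Finset.add_sum_erase _ _ (Finset.mem_univ i), if_pos rfl]
      have : ∑ k ∈ Finset.univ.erase i, (if k = i then r (Tv i (some (i,b))) + (ℓ-1)*(r d + r (d+1)) else W) = (ℓ-1) * W := by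
        rw [Finset.sum_congr rfl (fun k hk => if_neg (Finset.mem_erase.mp hk).1),
          Finset.sum_const, Finset.card_erase_of_mem (Finset.mem_univ i),
          Finset.card_univ, Fintype.card_fin, smul_eq_mul]
      rw [this, Nat.add_assoc]
    rw [score, hu_lit i b, hmerge]
  have hscore_none : score r oth d Tv none = ℓ*W + 2*ℓ*r (2*ℓ+1) := by
    have hmerge : (∑ k : Fin ℓ, r (Tv k none))
        + ∑ k : Fin ℓ, ∑ j ∈ Finset.Icc 1 (2*ℓ-2), r (vijPos oth d k j none) = ℓ * W := by
      rw [← Finset.sum_add_distrib,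
        Finset.sum_congr rfl (fun k _ => hblock_other k none (by simp) (by simp)),
        Finset.sum_const, Finset.card_univ, Fintype.card_fin, smul_eq_mul]
    rw [score, hu_none, hmerge]
  -- the sum identity
  have hWR : W + (r d + r (d+1)) = Su + r (2*ℓ+1) := by
    have hR : Su + r (2*ℓ+1) = ∑ t ∈ Finset.Ico 0 (2*ℓ+1), r (t+1) := by
      rw [← Finset.range_eq_Ico, Finset.sum_range_succ, hSu]
    have htail : ∀ a : ℕ, d - 1 ≤ a →
        ∑ t ∈ Finset.Ico (d-1) a, r (t+3) = ∑ t ∈ Finset.Ico (d+1) (a+2), r (t+1) := by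
      intro a ha
      rw [Finset.sum_Ico_eq_sum_range, Finset.sum_Ico_eq_sum_range,
        show a + 2 - (d+1) = a - (d-1) from by omega]
      exact Finset.sum_congr rfl fun t _ => by congr 1; omega
    have e1 : W = (∑ t ∈ Finset.Ico 0 (d-1), r (t+1)) + ∑ t ∈ Finset.Ico (d+1) (2*ℓ+1), r (t+1) := by
      rw [hW, Finset.range_eq_Ico, ← Finset.sum_Ico_consecutive _
        (by omega : (0:ℕ) ≤ d-1) (by omega : d-1 ≤ 2*ℓ-1)]
      congr 1
      · exact Finset.sum_congr rfl fun t ht => by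
          have := Finset.mem_Ico.mp ht
          rw [if_pos (by omega)]
      · rw [show (2*ℓ+1) = (2*ℓ-1)+2 from by omega, ← htail (2*ℓ-1) (by omega)]
        exact Finset.sum_congr rfl fun t ht => by
          have := Finset.mem_Ico.mp ht
          rw [if_neg (by omega)]
    have e2 : ∑ t ∈ Finset.Ico 0 (2*ℓ+1), r (t+1)
        = ((∑ t ∈ Finset.Ico 0 (d-1), r (t+1)) + ∑ t ∈ Finset.Ico (d-1) (d+1), r (t+1))
          + ∑ t ∈ Finset.Ico (d+1) (2*ℓ+1), r (t+1) := by
      rw [Finset.sum_Ico_consecutive (fun t => r (t+1))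
          (by omega : (0:ℕ) ≤ d-1) (by omega : d-1 ≤ d+1),
        Finset.sum_Ico_consecutive (fun t => r (t+1))
          (by omega : (0:ℕ) ≤ d+1) (by omega : d+1 ≤ 2*ℓ+1)]
    have e3 : ∑ t ∈ Finset.Ico (d-1) (d+1), r (t+1) = r d + r (d+1) := by
      rw [Finset.sum_eq_sum_Ico_succ_bot (by omega : d-1 < d+1),
        show d-1+1 = d from by omega,
        Finset.sum_eq_sum_Ico_succ_bot (by omega : d < d+1),
        Finset.Ico_self, Finset.sum_empty]
      omega
    omega
  -- comparisons
  have hm1 : r (2*ℓ+1) ≤ r (d+1) := hr_mono (d+1) (2*ℓ+1) (by omega) (by omega) (le_refl _)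
  set M : ℕ := r d + (ℓ-1)*(r d + r (d+1)) + (ℓ-1)*W + Su with hM
  have hkey : ∀ (i : Fin ℓ) (b : Bool), Selects Tv i b →
      score r oth d Tv (some (i,b)) = M := by
    intro i b hb
    rw [hscore_lit i b, (hsel i b).mp hb]
  have hkey2 : ∀ (i : Fin ℓ) (b : Bool), ¬ Selects Tv i b →
      score r oth d Tv (some (i,b)) < M := by
    intro i b hb
    have hTvb : Tv i (some (i,b)) = d + 1 := by
      rcases hTv_pair i with ⟨h1, h2⟩ | ⟨h1, h2⟩ <;> cases b <;>
        simp only [Selects, if_true, if_false, Bool.false_eq_true, h1, h2] at hb ⊢ <;>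
        omega
    rw [hscore_lit i b, hTvb, hM]
    omega
  have hnone_lt : score r oth d Tv none < M := by
    rw [hscore_none, hM]
    obtain ⟨e, rfl⟩ : ∃ e, ℓ = e + 1 := ⟨ℓ-1, by omega⟩
    simp only [Nat.add_sub_cancel]
    have h1 : e * (r (2*(e+1)+1) + r (2*(e+1)+1)) ≤ e * (r d + r (d+1)) :=
      Nat.mul_le_mul_left e (by omega)
    nlinarith [hWR, hrd, hm1, h1]
  -- a selected literal always exists
  obtain ⟨i0, b0, hs0⟩ : ∃ (i0 : Fin ℓ) (b0 : Bool), Selects Tv i0 b0 := by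
    refine ⟨⟨0, hℓ⟩, ?_⟩
    rcases hTv_pair ⟨0, hℓ⟩ with ⟨h1, h2⟩ | ⟨h1, h2⟩
    · exact ⟨true, by simp [Selects, h1, h2]⟩
    · exact ⟨false, by simp [Selects, h1, h2]⟩
  -- conclusion
  intro c
  constructor
  · intro hwin
    have hle := hwin (some (i0, b0))
    rw [hkey i0 b0 hs0] at hle
    match c with
    | none => exact absurd (lt_of_lt_of_le hnone_lt hle) (lt_irrefl _)
    | some (i, b) =>
      refine ⟨i, b, rfl, ?_⟩
      by_contra hns
      exact absurd (lt_of_lt_of_le (hkey2 i b hns) hle) (lt_irrefl _)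
  · rintro ⟨i, b, rfl, hselb⟩
    intro c'
    rw [hkey i b hselb]
    match c' with
    | none => exact le_of_lt hnone_lt
    | some (i', b') =>
      by_cases h : Selects Tv i' b'
      · rw [hkey i' b' h]
      · exact le_of_lt (hkey2 i' b' h)
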